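/- Let N ≥ 2 and s ∈ (0, 1/2]. Then there is a constant C = C(N) such that for all y ∈ ℝ^N with 0 < |y|, | (κ_{N,s}/s) |y|^{2s} − c_N | ≤ s C ( 1 + |ln|y|| + |ln|y|| · |y|^{2s} ), where κ_{N,s} = Γ(N/2 − s)/(4^s π^{N/2} Γ(s)) and c_N = Γ(N/2)/π^{N/2}. -/

import Mathlib

open Real Set

lemma analyticAt_realGamma {x : ℝ} (hx : 0 < x) : AnalyticAt ℝ Real.Gamma x := by
  have hU : IsOpen {z : ℂ | 0 < z.re} := isOpen_lt continuous_const Complex.continuous_re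
  have hd : DifferentiableOn ℂ Complex.Gamma {z : ℂ | 0 < z.re} := fun z hz =>
    (Complex.differentiableAt_Gamma z (fun m h => by
      rw [h] at hz; simp at hz
      exact absurd hz (by push_neg; positivity))).differentiableWithinAt
  have hc : AnalyticAt ℂ Complex.Gamma (x : ℂ) :=
    hd.analyticAt (hU.mem_nhds (by simpa using hx))
  have h1 : AnalyticAt ℝ (fun t : ℝ => (Complex.Gamma (t : ℂ)).re) x :=
    (Complex.reCLM.analyticAt _).comp ((hc.restrictScalars).comp (Complex.ofRealCLM.analyticAt x))
  have heq : Real.Gamma = fun t : ℝ => (Complex.Gamma (t : ℂ)).re := by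
    funext t; rw [Complex.Gamma_ofReal, Complex.ofReal_re]
  rw [heq]; exact h1

noncomputable def rieszG (N : ℕ) (t : ℝ) : ℝ :=
  Real.Gamma ((N : ℝ) / 2 - t) / ((4 : ℝ) ^ t * π ^ ((N : ℝ) / 2) * Real.Gamma (t + 1))

lemma rieszG_lip (N : ℕ) (hN : 2 ≤ N) :
    ∃ C₁ : ℝ, 0 ≤ C₁ ∧ ∀ t ∈ Set.Icc (0 : ℝ) (1/2), |rieszG N t - rieszG N 0| ≤ C₁ * t := by
  have hN' : (1 : ℝ) ≤ (N : ℝ) / 2 := by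
    have : (2 : ℝ) ≤ (N : ℝ) := by exact_mod_cast hN
    linarith
  set U : Set ℝ := Set.Ioo (-(1 : ℝ)/2) (3/4) with hUdef
  have hUopen : IsOpen U := isOpen_Ioo
  have hsub : Set.Icc (0 : ℝ) (1/2) ⊆ U := fun x hx => ⟨by linarith [hx.1], by linarith [hx.2]⟩
  have hg : ContDiffOn ℝ 2 (rieszG N) U := by
    intro x hx
    have hx1 : (0 : ℝ) < (N : ℝ) / 2 - x := by
      have := hx.2; simp only [hUdef, Set.mem_Ioo] at hx; linarith [hx.2]
    have hx2 : (0 : ℝ) < x + 1 := by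
      simp only [hUdef, Set.mem_Ioo] at hx; linarith [hx.1]
    have ha : ContDiffAt ℝ 2 (fun t : ℝ => Real.Gamma ((N : ℝ) / 2 - t)) x :=
      ((analyticAt_realGamma hx1).contDiffAt).comp x (contDiffAt_const.sub contDiffAt_id)
    have hb : ContDiffAt ℝ 2 (fun t : ℝ => (4 : ℝ) ^ t) x := by
      have he : (fun t : ℝ => (4 : ℝ) ^ t) = fun t : ℝ => Real.exp (Real.log 4 * t) :=
        funext fun t => Real.rpow_def_of_pos (by norm_num) t
      rw [he]
      exact (Real.contDiff_exp.comp (contDiff_const.mul contDiff_id)).contDiffAt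
    have hcg : ContDiffAt ℝ 2 (fun t : ℝ => Real.Gamma (t + 1)) x :=
      ((analyticAt_realGamma hx2).contDiffAt).comp (g := Real.Gamma) (f := fun t : ℝ => t + 1) x (contDiffAt_id.add contDiffAt_const)
    have hden : (4 : ℝ) ^ x * π ^ ((N : ℝ) / 2) * Real.Gamma (x + 1) ≠ 0 := by
      have h1 : (0 : ℝ) < (4 : ℝ) ^ x := Real.rpow_pos_of_pos (by norm_num) x
      have h2 : (0 : ℝ) < π ^ ((N : ℝ) / 2) := Real.rpow_pos_of_pos Real.pi_pos _
      have h3 : (0 : ℝ) < Real.Gamma (x + 1) := Real.Gamma_pos_of_pos hx2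
      positivity
    exact (ha.div ((hb.mul contDiffAt_const).mul hcg) hden).contDiffWithinAt
  have hdiff : ∀ x ∈ Set.Icc (0 : ℝ) (1/2), DifferentiableAt ℝ (rieszG N) x := fun x hx =>
    ((hg.differentiableOn (by norm_num)).differentiableAt (hUopen.mem_nhds (hsub hx)))
  have hcont : ContinuousOn (deriv (rieszG N)) (Set.Icc (0 : ℝ) (1/2)) :=
    (hg.continuousOn_deriv_of_isOpen hUopen (by norm_num)).mono hsub
  obtain ⟨C0, hC0⟩ := (isCompact_Icc (a := (0:ℝ)) (b := 1/2)).exists_bound_of_continuousOn hcont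
  refine ⟨max C0 0, le_max_right _ _, fun t ht => ?_⟩
  have h := (convex_Icc (0:ℝ) (1/2)).norm_image_sub_le_of_norm_deriv_le (C := max C0 0) hdiff
    (fun x hx => (hC0 x hx).trans (le_max_left C0 0))
    (Set.mem_Icc.mpr ⟨le_refl 0, by norm_num⟩) ht
  simpa [Real.norm_eq_abs, abs_of_nonneg ht.1] using h

theorem riesz_kernel_expansion_estimate (N : ℕ) (hN : 2 ≤ N) :
    ∃ C : ℝ, 0 < C ∧ ∀ s ∈ Set.Ioc (0:ℝ) (1/2), ∀ y : EuclideanSpace ℝ (Fin N), y ≠ 0 →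
      |Real.Gamma ((N:ℝ)/2 - s) / ((4:ℝ) ^ s * π ^ ((N:ℝ)/2) * Real.Gamma s) / s *
          ‖y‖ ^ (2 * s) - Real.Gamma ((N:ℝ)/2) / π ^ ((N:ℝ)/2)| ≤
        s * C * (1 + |Real.log ‖y‖| + |Real.log ‖y‖| * ‖y‖ ^ (2 * s)) := by
  have hN' : (1 : ℝ) ≤ (N : ℝ) / 2 := by
    have : (2 : ℝ) ≤ (N : ℝ) := by exact_mod_cast hN
    linarith
  set c : ℝ := Real.Gamma ((N:ℝ)/2) / π ^ ((N:ℝ)/2) with hcdef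
  have hc : 0 < c :=
    div_pos (Real.Gamma_pos_of_pos (by linarith)) (Real.rpow_pos_of_pos Real.pi_pos _)
  obtain ⟨C₁, hC₁0, hlip⟩ := rieszG_lip N hN
  have hg0 : rieszG N 0 = c := by
    simp [rieszG, Real.rpow_zero, Real.Gamma_one, hcdef]
  refine ⟨C₁ + 2 * c, by positivity, ?_⟩
  intro s hs y hy
  obtain ⟨hs0, hs12⟩ := hs
  have hy0 : (0 : ℝ) < ‖y‖ := norm_pos_iff.mpr hy
  set L : ℝ := Real.log ‖y‖ with hLdef
  set r : ℝ := ‖y‖ ^ (2 * s) with hrdef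
  have hr : r = Real.exp (2 * s * L) := by
    rw [hrdef, Real.rpow_def_of_pos hy0, hLdef]; ring_nf
  have hr0 : 0 < r := by rw [hr]; exact Real.exp_pos _
  -- rewrite the main quantity in terms of rieszG
  have hkey : Real.Gamma ((N:ℝ)/2 - s) / ((4:ℝ) ^ s * π ^ ((N:ℝ)/2) * Real.Gamma s) / s
      = rieszG N s := by
    rw [rieszG, Real.Gamma_add_one (ne_of_gt hs0), div_div]
    ring_nf
  -- Lipschitz bound
  have h1 : |rieszG N s - c| ≤ C₁ * s := by
    rw [← hg0]; exact hlip s ⟨le_of_lt hs0, hs12⟩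
  -- r ≤ 1 + |L| * r
  have h2 : r ≤ 1 + |L| * r := by
    rcases le_or_gt L 0 with hL | hL
    · have : r ≤ 1 := by
        rw [hr]; exact Real.exp_le_one_iff.mpr (by nlinarith)
      nlinarith [abs_nonneg L, hr0]
    · have habs : |L| = L := abs_of_pos hL
      have he := Real.add_one_le_exp (-(2 * s * L))
      have hinv : Real.exp (-(2 * s * L)) * Real.exp (2 * s * L) = 1 := by
        rw [← Real.exp_add]; simp
      rw [habs, hr]
      nlinarith [Real.exp_pos (2 * s * L), Real.exp_pos (-(2 * s * L))]
  -- |r - 1| ≤ 2 * s * |L| * (1 + r)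
  have h3 : |r - 1| ≤ 2 * s * |L| * (1 + r) := by
    rcases le_or_gt 0 L with hL | hL
    · have habs : |L| = L := abs_of_nonneg hL
      have hr1 : 1 ≤ r := by
        rw [hr]; exact Real.one_le_exp (by positivity)
      have he := Real.add_one_le_exp (-(2 * s * L))
      have hinv : Real.exp (-(2 * s * L)) * Real.exp (2 * s * L) = 1 := by
        rw [← Real.exp_add]; simp
      rw [abs_of_nonneg (by linarith), habs, hr]
      rw [hr] at hr1
      nlinarith [Real.exp_pos (2 * s * L), Real.exp_pos (-(2 * s * L))]
    · have habs : |L| = -L := abs_of_neg hL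
      have hr1 : r ≤ 1 := by
        rw [hr]; exact Real.exp_le_one_iff.mpr (by nlinarith)
      have he := Real.add_one_le_exp (2 * s * L)
      rw [abs_of_nonpos (by linarith), habs, hr]
      rw [hr] at hr1
      nlinarith [Real.exp_pos (2 * s * L)]
  rw [hkey]
  have hsplit : rieszG N s * r - c = (rieszG N s - c) * r + c * (r - 1) := by ring
  calc |rieszG N s * r - c| ≤ |rieszG N s - c| * r + c * |r - 1| := by
        rw [hsplit]
        refine (abs_add_le _ _).trans ?_
        rw [abs_mul, abs_mul, abs_of_pos hr0, abs_of_pos hc]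
    _ ≤ (C₁ * s) * r + c * (2 * s * |L| * (1 + r)) := by
        have := mul_le_mul_of_nonneg_right h1 (le_of_lt hr0)
        have := mul_le_mul_of_nonneg_left h3 (le_of_lt hc)
        linarith
    _ ≤ s * (C₁ + 2 * c) * (1 + |L| + |L| * r) := by
        have hh : C₁ * s * r ≤ C₁ * s * (1 + |L| * r) :=
          mul_le_mul_of_nonneg_left h2 (mul_nonneg hC₁0 hs0.le)
        nlinarith [hh, mul_nonneg (mul_nonneg hC₁0 hs0.le) (abs_nonneg L), mul_pos hs0 hc]
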